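/- For the family of dyadic cubes in ℝⁿ (with Q_x the set of dyadic cubes containing x) and Lebesgue measure mⁿ, the Hardy–Littlewood maximal constant equals exactly 1: for every set function F on dyadic cubes and r > 0, mⁿ{x : sup_{Q dyadic, x ∈ Q} F(Q)/mⁿ(Q) > r} ≤ r⁻¹ ‖F‖, and no constant smaller than 1 works. -/

import Mathlib

open Set MeasureTheory ENNReal

/-- The norm `‖F‖_𝒬`: supremum of finite sums of `F` over pairwise disjoint members of `𝒬`. -/
noncomputable def hlNorm {X : Type*} (𝒬 : Set (Set X)) (F : Set X → ℝ≥0∞) : ℝ≥0∞ :=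
  ⨆ s : {s : Finset (Set X) // ↑s ⊆ 𝒬 ∧ (s : Set (Set X)).Pairwise Disjoint}, ∑ Q ∈ s.1, F Q

/-- The abstract maximal function `M F(x) = sup_{Q ∈ 𝒬ₓ} F(Q)/μ(Q)`. -/
noncomputable def hlMax {X : Type*} (Qx : X → Set (Set X)) (μ : Set X → ℝ≥0∞)
    (F : Set X → ℝ≥0∞) (x : X) : ℝ≥0∞ :=
  ⨆ Q ∈ Qx x, F Q / μ Q

/-- The dyadic cube `2^ℓ m + 2^ℓ [0,1)ⁿ` in `ℝⁿ`. -/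
def dyadicCube (n : ℕ) (ℓ : ℤ) (m : Fin n → ℤ) : Set (Fin n → ℝ) :=
  {x | ∀ i, (2 : ℝ) ^ ℓ * m i ≤ x i ∧ x i < (2 : ℝ) ^ ℓ * (m i + 1)}

lemma dyadicCube_eq_pi (n : ℕ) (ℓ : ℤ) (m : Fin n → ℤ) :
    dyadicCube n ℓ m = Set.univ.pi (fun i => Ico ((2:ℝ)^ℓ * m i) ((2:ℝ)^ℓ * (m i + 1))) := by
  ext x; simp [dyadicCube, Set.mem_pi, Ico]

lemma volume_dyadicCube (n : ℕ) (ℓ : ℤ) (m : Fin n → ℤ) :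
    volume (dyadicCube n ℓ m) = (ENNReal.ofReal ((2:ℝ)^ℓ))^n := by
  rw [dyadicCube_eq_pi, volume_pi_pi]
  have : ∀ i : Fin n, volume (Ico ((2:ℝ)^ℓ * m i) ((2:ℝ)^ℓ * (m i + 1)))
      = ENNReal.ofReal ((2:ℝ)^ℓ) := by
    intro i
    rw [Real.volume_Ico]
    ring_nf
  simp [this]

-- integer aux: overlapping dyadic intervals at comparable scales
lemma int_aux (a b : ℤ) (k : ℕ) (h1 : (b * 2^k : ℝ) < a + 1) (h2 : (a:ℝ) < (b+1) * 2^k) :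
    (b * 2^k : ℤ) ≤ a ∧ a + 1 ≤ (b+1) * 2^k := by
  constructor
  · have : (b * 2^k : ℤ) < a + 1 := by exact_mod_cast h1
    omega
  · have : (a : ℤ) < (b+1) * 2^k := by exact_mod_cast h2
    omega

lemma dyadicCube_subset {n : ℕ} {ℓ ℓ' : ℤ} {m m' : Fin n → ℤ} (hℓ : ℓ ≤ ℓ')
    {x : Fin n → ℝ} (hx : x ∈ dyadicCube n ℓ m) (hx' : x ∈ dyadicCube n ℓ' m') :
    dyadicCube n ℓ m ⊆ dyadicCube n ℓ' m' := by
  intro y hy i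
  obtain ⟨k, hk⟩ : ∃ k : ℕ, ℓ' = ℓ + k := ⟨(ℓ' - ℓ).toNat, by omega⟩
  have hs : (0:ℝ) < (2:ℝ)^ℓ := zpow_pos (by norm_num) _
  have hpow : (2:ℝ)^ℓ' = (2:ℝ)^ℓ * (2:ℝ)^k := by
    rw [hk, zpow_add₀ (by norm_num : (2:ℝ) ≠ 0)]; norm_num
  obtain ⟨h1, h2⟩ := hx i
  obtain ⟨h3, h4⟩ := hx' i
  obtain ⟨h5, h6⟩ := hy i
  -- overlap inequalities divided by 2^ℓ
  have ha1 : ((m' i) * 2^k : ℝ) < m i + 1 := by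
    have : (2:ℝ)^ℓ * ((m' i) * 2^k) < (2:ℝ)^ℓ * (m i + 1) := by
      calc (2:ℝ)^ℓ * ((m' i) * 2^k) = (2:ℝ)^ℓ' * m' i := by rw [hpow]; ring
        _ ≤ x i := h3
        _ < _ := h2
    exact lt_of_mul_lt_mul_left this hs.le
  have ha2 : (m i : ℝ) < (m' i + 1) * 2^k := by
    have : (2:ℝ)^ℓ * (m i) < (2:ℝ)^ℓ * ((m' i + 1) * 2^k) := by
      calc (2:ℝ)^ℓ * (m i) ≤ x i := h1
        _ < (2:ℝ)^ℓ' * (m' i + 1) := h4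
        _ = _ := by rw [hpow]; ring
    exact lt_of_mul_lt_mul_left this hs.le
  obtain ⟨hb1, hb2⟩ := int_aux (m i) (m' i) k (by exact_mod_cast ha1) (by exact_mod_cast ha2)
  have hb1' : ((m' i) * 2^k : ℝ) ≤ m i := by exact_mod_cast hb1
  have hb2' : ((m i : ℝ) + 1) ≤ (m' i + 1) * 2^k := by exact_mod_cast hb2
  constructor
  · calc (2:ℝ)^ℓ' * m' i = (2:ℝ)^ℓ * ((m' i) * 2^k) := by rw [hpow]; ring
      _ ≤ (2:ℝ)^ℓ * m i := by nlinarith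
      _ ≤ y i := h5
  · calc y i < (2:ℝ)^ℓ * (m i + 1) := h6
      _ ≤ (2:ℝ)^ℓ * ((m' i + 1) * 2^k) := by nlinarith
      _ = (2:ℝ)^ℓ' * (m' i + 1) := by rw [hpow]; ring

lemma sum_le_hlNorm {X : Type*} {𝒬 : Set (Set X)} {F : Set X → ℝ≥0∞} (s : Finset (Set X))
    (h1 : ↑s ⊆ 𝒬) (h2 : (s : Set (Set X)).Pairwise Disjoint) :
    ∑ Q ∈ s, F Q ≤ hlNorm 𝒬 F := by
  unfold hlNorm
  exact le_iSup_of_le ⟨s, h1, h2⟩ le_rfl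

lemma single_le_hlNorm {X : Type*} {𝒬 : Set (Set X)} {F : Set X → ℝ≥0∞} {Q : Set X}
    (hQ : Q ∈ 𝒬) : F Q ≤ hlNorm 𝒬 F := by
  have := sum_le_hlNorm (F := F) {Q} (by simpa using hQ) (by simp)
  simpa using this

lemma volume_dyadicCube_ne_zero (n : ℕ) (ℓ : ℤ) (m : Fin n → ℤ) :
    volume (dyadicCube n ℓ m) ≠ 0 := by
  rw [volume_dyadicCube]
  exact pow_ne_zero _ (ENNReal.ofReal_pos.mpr (zpow_pos two_pos ℓ)).ne'

lemma volume_dyadicCube_ne_top (n : ℕ) (ℓ : ℤ) (m : Fin n → ℤ) :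
    volume (dyadicCube n ℓ m) ≠ ⊤ := by
  rw [volume_dyadicCube]
  exact pow_ne_top ofReal_ne_top

lemma dyadicCube_zero (ℓ : ℤ) (m : Fin 0 → ℤ) : dyadicCube 0 ℓ m = univ := by
  ext x; exact ⟨fun _ => trivial, fun _ i => i.elim0⟩

theorem dyadic_hl_constant_eq_one (n : ℕ) :
    (∀ F : Set (Fin n → ℝ) → ℝ≥0∞, ∀ r : ℝ≥0∞, 0 < r → r ≠ ⊤ →
      volume {x | r < hlMax
          (fun x => {Q | (∃ ℓ m, Q = dyadicCube n ℓ m) ∧ x ∈ Q}) (volume ·) F x} ≤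
        1 * r⁻¹ * hlNorm {Q | ∃ ℓ m, Q = dyadicCube n ℓ m} F) ∧
    (∀ c : ℝ≥0∞,
      (∀ F : Set (Fin n → ℝ) → ℝ≥0∞, ∀ r : ℝ≥0∞, 0 < r → r ≠ ⊤ →
        volume {x | r < hlMax
            (fun x => {Q | (∃ ℓ m, Q = dyadicCube n ℓ m) ∧ x ∈ Q}) (volume ·) F x} ≤
          c * r⁻¹ * hlNorm {Q | ∃ ℓ m, Q = dyadicCube n ℓ m} F) → 1 ≤ c) := by
  constructor
  · classical
    intro F r hr0 hrt
    set 𝒬 : Set (Set (Fin n → ℝ)) := {Q | ∃ ℓ m, Q = dyadicCube n ℓ m} with h𝒬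
    set N := hlNorm 𝒬 F with hN
    rw [one_mul]
    by_cases hNtop : N = ⊤
    · rw [hNtop, ENNReal.mul_top (ENNReal.inv_ne_zero.mpr hrt)]
      exact le_top
    set S := {x | r < hlMax
        (fun x => {Q | (∃ ℓ m, Q = dyadicCube n ℓ m) ∧ x ∈ Q}) (volume ·) F x} with hS
    -- every point of S lies in a "bad" cube
    have hbad : ∀ x ∈ S, ∃ ℓ m, x ∈ dyadicCube n ℓ m ∧
        r * volume (dyadicCube n ℓ m) < F (dyadicCube n ℓ m) := by
      intro x hx
      rw [hS, mem_setOf_eq, hlMax, lt_iSup_iff] at hx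
      obtain ⟨Q, hQ⟩ := hx
      rw [lt_iSup_iff] at hQ
      obtain ⟨⟨⟨ℓ, m, rfl⟩, hxQ⟩, hlt⟩ := hQ
      refine ⟨ℓ, m, hxQ, ?_⟩
      rw [ENNReal.lt_div_iff_mul_lt (Or.inl (volume_dyadicCube_ne_zero n ℓ m))
        (Or.inl (volume_dyadicCube_ne_top n ℓ m))] at hlt
      exact hlt
    -- bad cubes give lower bound on N via r
    have hbadN : ∀ ℓ m, r * volume (dyadicCube n ℓ m) < F (dyadicCube n ℓ m) →
        volume (dyadicCube n ℓ m) ≤ r⁻¹ * N := by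
      intro ℓ m h
      have hF : F (dyadicCube n ℓ m) ≤ N := single_le_hlNorm ⟨ℓ, m, rfl⟩
      calc volume (dyadicCube n ℓ m)
          = r⁻¹ * (r * volume (dyadicCube n ℓ m)) := by
            rw [← mul_assoc, ENNReal.inv_mul_cancel hr0.ne' hrt, one_mul]
        _ ≤ r⁻¹ * F (dyadicCube n ℓ m) := mul_le_mul_right h.le _
        _ ≤ r⁻¹ * N := mul_le_mul_right hF _
    rcases Nat.eq_zero_or_pos n with hn | hn
    · -- n = 0 : all cubes are univ
      subst hn
      rcases eq_empty_or_nonempty S with hSe | ⟨x, hx⟩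
      · rw [hSe]; simp
      obtain ⟨ℓ, m, _, hb⟩ := hbad x hx
      have := hbadN ℓ m hb
      rw [dyadicCube_zero] at this
      calc volume S ≤ volume (univ : Set (Fin 0 → ℝ)) := measure_mono (subset_univ S)
        _ ≤ r⁻¹ * N := this
    -- main case n ≥ 1
    have hC : r⁻¹ * N ≠ ⊤ := ENNReal.mul_ne_top (ENNReal.inv_ne_top.mpr hr0.ne') hNtop
    obtain ⟨L, hL⟩ : ∃ L : ℕ, r⁻¹ * N < ENNReal.ofReal ((2:ℝ)^(L:ℤ)) := by
      obtain ⟨L, hL⟩ := pow_unbounded_of_one_lt (r⁻¹ * N).toReal (by norm_num : (1:ℝ) < 2)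
      refine ⟨L, ?_⟩
      rw [ENNReal.lt_ofReal_iff_toReal_lt hC, zpow_natCast]
      exact hL
    -- bad cubes have level < L
    have hbound : ∀ ℓ (m : Fin n → ℤ),
        r * volume (dyadicCube n ℓ m) < F (dyadicCube n ℓ m) → ℓ < (L:ℤ) := by
      intro ℓ m h
      by_contra hcon
      push_neg at hcon
      have h1 : (1:ℝ≥0∞) ≤ ENNReal.ofReal ((2:ℝ)^ℓ) := by
        rw [show (1:ℝ≥0∞) = ENNReal.ofReal 1 by simp]
        exact ENNReal.ofReal_le_ofReal (one_le_zpow₀ one_le_two ((Int.natCast_nonneg L).trans hcon))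
      have h2 : ENNReal.ofReal ((2:ℝ)^(L:ℤ)) ≤ volume (dyadicCube n ℓ m) := by
        rw [volume_dyadicCube]
        calc ENNReal.ofReal ((2:ℝ)^(L:ℤ)) ≤ ENNReal.ofReal ((2:ℝ)^ℓ) :=
            ENNReal.ofReal_le_ofReal (zpow_le_zpow_right₀ one_le_two hcon)
          _ ≤ (ENNReal.ofReal ((2:ℝ)^ℓ))^n := le_self_pow₀ h1 hn.ne'
      exact absurd (hL.trans_le (h2.trans (hbadN ℓ m h))) (lt_irrefl _)
    -- maximal bad cube selection
    have hsel : ∀ x ∈ S, ∃ ℓ, (∃ m, x ∈ dyadicCube n ℓ m ∧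
        r * volume (dyadicCube n ℓ m) < F (dyadicCube n ℓ m)) ∧
        ∀ ℓ', (∃ m', x ∈ dyadicCube n ℓ' m' ∧
          r * volume (dyadicCube n ℓ' m') < F (dyadicCube n ℓ' m')) → ℓ' ≤ ℓ := by
      intro x hx
      obtain ⟨ℓ, hP, hmax⟩ := Int.exists_greatest_of_bdd
        (P := fun ℓ => ∃ m, x ∈ dyadicCube n ℓ m ∧
          r * volume (dyadicCube n ℓ m) < F (dyadicCube n ℓ m))
        ⟨L, fun z ⟨m, _, hb⟩ => (hbound z m hb).le⟩
        (by obtain ⟨ℓ, m, h1, h2⟩ := hbad x hx; exact ⟨ℓ, m, h1, h2⟩)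
      exact ⟨ℓ, hP, hmax⟩
    choose! ℓsel hsel1 hsel2 using hsel
    choose! msel hm1 hm2 using hsel1
    set 𝒯 : Set (Set (Fin n → ℝ)) :=
      {Q | ∃ x, x ∈ S ∧ Q = dyadicCube n (ℓsel x) (msel x)} with h𝒯
    have h𝒯cnt : 𝒯.Countable := by
      apply Countable.mono ?_ (countable_range (fun p : ℤ × (Fin n → ℤ) => dyadicCube n p.1 p.2))
      rintro Q ⟨x, _, rfl⟩
      exact ⟨(ℓsel x, msel x), rfl⟩
    have h𝒯bad : ∀ Q ∈ 𝒯, r * volume Q < F Q := by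
      rintro Q ⟨x, hx, rfl⟩
      exact hm2 x hx
    have h𝒯𝒬 : 𝒯 ⊆ 𝒬 := by
      rintro Q ⟨x, hx, rfl⟩
      exact ⟨_, _, rfl⟩
    have hcover : S ⊆ ⋃₀ 𝒯 := fun x hx => ⟨_, ⟨x, hx, rfl⟩, hm1 x hx⟩
    have hdisj : 𝒯.Pairwise Disjoint := by
      rintro Q ⟨x, hx, rfl⟩ Q' ⟨y, hy, rfl⟩ hne
      by_contra hcon
      obtain ⟨z, hz1, hz2⟩ := Set.not_disjoint_iff.mp hcon
      apply hne
      rcases le_total (ℓsel x) (ℓsel y) with h | h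
      · have hsub := dyadicCube_subset h hz1 hz2
        have hyx : ℓsel y ≤ ℓsel x :=
          hsel2 x hx (ℓsel y) ⟨msel y, hsub (hm1 x hx), hm2 y hy⟩
        have : ℓsel x = ℓsel y := le_antisymm h hyx
        exact Subset.antisymm hsub (dyadicCube_subset hyx hz2 hz1)
      · have hsub := dyadicCube_subset h hz2 hz1
        have hxy : ℓsel x ≤ ℓsel y :=
          hsel2 y hy (ℓsel x) ⟨msel x, hsub (hm1 y hy), hm2 x hx⟩
        exact Subset.antisymm (dyadicCube_subset hxy hz1 hz2) hsub
    -- sum bound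
    have htsum : ∑' Q : 𝒯, F ↑Q ≤ N := by
      rw [ENNReal.tsum_eq_iSup_sum]
      apply iSup_le
      intro t
      have hinj : Set.InjOn Subtype.val (t : Set 𝒯) := fun a _ b _ h => Subtype.ext h
      rw [← Finset.sum_image (f := F) (g := Subtype.val) (fun a ha b hb h => Subtype.ext h)]
      apply sum_le_hlNorm
      · intro Q hQ
        simp only [Finset.coe_image, mem_image] at hQ
        obtain ⟨a, _, rfl⟩ := hQ
        exact h𝒯𝒬 a.2
      · intro Q hQ Q' hQ' hne
        simp only [Finset.coe_image, mem_image] at hQ hQ'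
        obtain ⟨a, _, rfl⟩ := hQ
        obtain ⟨b, _, rfl⟩ := hQ'
        exact hdisj a.2 b.2 hne
    have hterm : ∀ Q : Set (Fin n → ℝ), r * volume Q < F Q → volume Q ≤ r⁻¹ * F Q := by
      intro Q h
      calc volume Q = r⁻¹ * (r * volume Q) := by
            rw [← mul_assoc, ENNReal.inv_mul_cancel hr0.ne' hrt, one_mul]
        _ ≤ r⁻¹ * F Q := mul_le_mul_right h.le _
    calc volume S ≤ volume (⋃₀ 𝒯) := measure_mono hcover
      _ = volume (⋃ Q ∈ 𝒯, Q) := by rw [sUnion_eq_biUnion]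
      _ ≤ ∑' Q : 𝒯, volume (Q : Set (Fin n → ℝ)) := by
          simpa using measure_biUnion_le volume h𝒯cnt id
      _ ≤ ∑' Q : 𝒯, r⁻¹ * F ↑Q :=
          ENNReal.tsum_le_tsum fun Q => hterm _ (h𝒯bad _ Q.2)
      _ = r⁻¹ * ∑' Q : 𝒯, F ↑Q := ENNReal.tsum_mul_left
      _ ≤ r⁻¹ * N := mul_le_mul_right htsum _
  · classical
    intro c hc
    by_contra h
    push_neg at h
    obtain ⟨r, hcr, hr1⟩ := exists_between h
    set Q0 : Set (Fin n → ℝ) := dyadicCube n 0 0 with hQ0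
    set F : Set (Fin n → ℝ) → ℝ≥0∞ := fun Q => if Q = Q0 then 1 else 0 with hF
    have hvol : volume Q0 = 1 := by
      rw [hQ0, volume_dyadicCube]; simp
    have hnorm : hlNorm {Q | ∃ ℓ m, Q = dyadicCube n ℓ m} F ≤ 1 := by
      apply iSup_le
      rintro ⟨s, hs1, hs2⟩
      calc ∑ Q ∈ s, F Q = if Q0 ∈ s then 1 else 0 := Finset.sum_ite_eq' s Q0 (fun _ => 1)
        _ ≤ 1 := by split <;> simp
    have hsub : Q0 ⊆ {x | r < hlMax
        (fun x => {Q | (∃ ℓ m, Q = dyadicCube n ℓ m) ∧ x ∈ Q}) (volume ·) F x} := by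
      intro x hx
      have h1 : F Q0 / volume Q0 = 1 := by simp [hF, hvol]
      have : (1:ℝ≥0∞) ≤ hlMax (fun x => {Q | (∃ ℓ m, Q = dyadicCube n ℓ m) ∧ x ∈ Q})
          (volume ·) F x := by
        rw [← h1]
        exact le_biSup (fun Q => F Q / volume Q) (show Q0 ∈ {Q | (∃ ℓ m, Q = dyadicCube n ℓ m) ∧ x ∈ Q} from ⟨⟨0, 0, rfl⟩, hx⟩)
      exact lt_of_lt_of_le hr1 this
    have hr0 : 0 < r := (zero_le : 0 ≤ c).trans_lt hcr
    have hrt : r ≠ ⊤ := (hr1.trans one_lt_top).ne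
    have key := hc F r hr0 hrt
    have h1le : (1:ℝ≥0∞) ≤ c * r⁻¹ := by
      calc (1:ℝ≥0∞) = volume Q0 := hvol.symm
        _ ≤ volume {x | r < hlMax
            (fun x => {Q | (∃ ℓ m, Q = dyadicCube n ℓ m) ∧ x ∈ Q}) (volume ·) F x} :=
          measure_mono hsub
        _ ≤ c * r⁻¹ * hlNorm {Q | ∃ ℓ m, Q = dyadicCube n ℓ m} F := key
        _ ≤ c * r⁻¹ * 1 := by exact mul_le_mul_right hnorm _
        _ = c * r⁻¹ := mul_one _
    have : r ≤ c := by
      have := mul_le_mul_left h1le r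
      rwa [one_mul, mul_assoc, ENNReal.inv_mul_cancel hr0.ne' hrt, mul_one] at this
    exact absurd (lt_of_le_of_lt this hcr) (lt_irrefl r)
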